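/- Let ρ be a density matrix on ℂ²⊗ℂ^d with decomposition ρ = ½(I₂⊗β₀ + Σᵢσᵢ⊗βᵢ) and define B² ≤ 4d·Σ_{a=1}^{3}‖β_a‖₂² for the maximal CHSH value B. If B > 2 (CHSH violation) then Tr(ρ²) > ½(Tr(ρ_B²) + 1/d) ≥ 1/d, where ρ_B = β₀ is the reduced state on ℂ^d. Formally: Tr(ρ²) ≥ ½(Tr(β₀²) + B²/(4d)), and Tr(β₀²) ≥ 1/d. -/
import Mathlib

open Matrix Kronecker
open scoped ComplexOrder

/-- The Pauli matrices `σ₁, σ₂, σ₃`. -/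
def pauli : Fin 3 → Matrix (Fin 2) (Fin 2) ℂ :=
  ![!![0, 1; 1, 0], !![0, -Complex.I; Complex.I, 0], !![1, 0; 0, -1]]

lemma pauli_trace (i : Fin 3) : (pauli i).trace = 0 := by
  fin_cases i <;> simp [pauli, Matrix.trace_fin_two]

lemma pauli_mul_trace (i j : Fin 3) :
    (pauli i * pauli j).trace = if i = j then 2 else 0 := by
  fin_cases i <;> fin_cases j <;>
    simp [pauli, Matrix.trace_fin_two, Matrix.mul_apply, Fin.sum_univ_two,
      Complex.ext_iff] <;> norm_num

/-- Purity bound for CHSH violation: if `ρ = ½(I₂⊗β₀ + Σᵢ σᵢ⊗βᵢ)` is a density matrix on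
`ℂ²⊗ℂ^d` and `B` satisfies `B² ≤ 4d·Σ_a ‖β_a‖₂²`, then
`Tr(ρ²) ≥ ½(Tr(β₀²) + B²/(4d))` and `Tr(β₀²) ≥ 1/d`. -/
theorem stmt17 {d : ℕ} (hd : 0 < d)
    (β0 : Matrix (Fin d) (Fin d) ℂ) (β : Fin 3 → Matrix (Fin d) (Fin d) ℂ)
    (hβ0 : β0.IsHermitian) (hβ : ∀ i, (β i).IsHermitian)
    (ρ : Matrix (Fin 2 × Fin d) (Fin 2 × Fin d) ℂ)
    (hρdef : ρ = (1 / 2 : ℂ) •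
      ((1 : Matrix (Fin 2) (Fin 2) ℂ) ⊗ₖ β0 + ∑ i : Fin 3, (pauli i) ⊗ₖ (β i)))
    (hpsd : ρ.PosSemidef) (htr : ρ.trace = 1)
    (B : ℝ) (hB : B ^ 2 ≤ 4 * d * ∑ a : Fin 3, (((β a)ᴴ * β a).trace).re) :
    ((ρ * ρ).trace).re ≥ (1 / 2) * (((β0 * β0).trace).re + B ^ 2 / (4 * d)) ∧
      ((β0 * β0).trace).re ≥ 1 / d := by
  have hd' : (0:ℝ) < d := by exact_mod_cast hd
  -- trace of β0 is 1
  have htrβ0 : β0.trace = 1 := by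
    rw [hρdef] at htr
    simpa [Matrix.trace_smul, Matrix.trace_add, Matrix.trace_sum,
      Matrix.trace_kronecker, pauli_trace, smul_eq_mul] using htr
  -- trace ρ²
  have hρρ : (ρ * ρ).trace =
      (1/4 : ℂ) * (2 * (β0 * β0).trace + 2 * ∑ i : Fin 3, (β i * β i).trace) := by
    rw [hρdef]
    rw [smul_mul_smul_comm]
    rw [Matrix.trace_smul]
    congr 1
    · norm_num
    rw [add_mul, mul_add, mul_add]
    simp only [Finset.sum_mul, Finset.mul_sum, Matrix.trace_add, Matrix.trace_sum,
      ← Matrix.mul_kronecker_mul, Matrix.trace_kronecker, Matrix.one_mul, Matrix.mul_one,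
      pauli_trace, pauli_mul_trace, Matrix.trace_one, zero_mul, mul_zero,
      Finset.sum_const_zero, ite_mul]
    simp [Finset.sum_ite_eq']
  -- the hermitian sums agree
  have hsum : ∑ a : Fin 3, (((β a)ᴴ * β a).trace).re
      = ∑ i : Fin 3, ((β i * β i).trace).re := by
    apply Finset.sum_congr rfl; intro a _; rw [(hβ a).eq]
  have hre : ((ρ * ρ).trace).re =
      (1/4) * (2 * ((β0 * β0).trace).re + 2 * ∑ i : Fin 3, ((β i * β i).trace).re) := by
    rw [hρρ]
    simp [Complex.mul_re, Complex.add_re, Complex.re_sum]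
  -- second part : Tr β0² ≥ 1/d
  have hβ0diag : ∑ i : Fin d, (β0 i i).re = 1 := by
    have : (β0.trace).re = 1 := by rw [htrβ0]; simp
    simpa [Matrix.trace, Matrix.diag, Complex.re_sum] using this
  have htrsq : ((β0 * β0).trace).re = ∑ i : Fin d, ∑ j : Fin d, Complex.normSq (β0 i j) := by
    have h1 : (β0 * β0).trace = ∑ i : Fin d, ∑ j : Fin d, β0 i j * β0 j i := by
      simp [Matrix.trace, Matrix.diag, Matrix.mul_apply]
    have h2 : ∀ i j : Fin d, β0 i j * β0 j i = (Complex.normSq (β0 i j) : ℂ) := by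
      intro i j
      have : β0 j i = starRingEnd ℂ (β0 i j) := by
        conv_lhs => rw [← hβ0.eq]
        simp [Matrix.conjTranspose_apply]
      rw [this, mul_comm]
      simp [Complex.normSq_eq_conj_mul_self]
    rw [h1]
    simp only [h2]
    simp [Complex.re_sum]
  have hlow : ((β0 * β0).trace).re ≥ 1 / d := by
    rw [htrsq]
    have h3 : ∑ i : Fin d, ∑ j : Fin d, Complex.normSq (β0 i j)
        ≥ ∑ i : Fin d, (β0 i i).re ^ 2 := by
      apply Finset.sum_le_sum
      intro i _
      calc (β0 i i).re ^ 2 ≤ Complex.normSq (β0 i i) := by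
            rw [Complex.normSq_apply]; nlinarith [sq_nonneg (β0 i i).im]
        _ ≤ ∑ j : Fin d, Complex.normSq (β0 i j) := by
            apply Finset.single_le_sum (f := fun j => Complex.normSq (β0 i j))
            · intro j _; exact Complex.normSq_nonneg _
            · simp
    have h4 : (1:ℝ) ≤ d * ∑ i : Fin d, (β0 i i).re ^ 2 := by
      have := sq_sum_le_card_mul_sum_sq (s := Finset.univ) (f := fun i : Fin d => (β0 i i).re)
      simpa [hβ0diag] using this
    rw [ge_iff_le, div_le_iff₀ hd']
    calc (1:ℝ) ≤ d * ∑ i : Fin d, (β0 i i).re ^ 2 := h4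
      _ ≤ (∑ i : Fin d, ∑ j : Fin d, Complex.normSq (β0 i j)) * d := by
          rw [mul_comm]; exact mul_le_mul_of_nonneg_right h3 (le_of_lt hd')
  refine ⟨?_, hlow⟩
  have hBd : B ^ 2 / (4 * d) ≤ ∑ i : Fin 3, ((β i * β i).trace).re := by
    rw [div_le_iff₀ (by positivity)]
    rw [← hsum]
    linarith [hB]
  rw [hre]
  have : ∑ i : Fin 3, ((β i * β i).trace).re ≥ B ^ 2 / (4 * d) := hBd
  linarith
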